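/- Suppose G ⊆ Homeo⁺(S^1) acts minimally on S^1 (every orbit is dense) and Λ is a G-invariant lamination with at least one leaf. Then for every ε > 0 there exists a leaf of Λ whose endpoints are at distance less than ε; consequently the closure of Λ in the closed Möbius band contains the entire boundary circle of degenerate leaves. -/

import Mathlib

open Set Metric Filter Topology Function
noncomputable section

/-- The circle, modeled as `ℝ/ℤ`. -/
abbrev C1 := AddCircle (1:ℝ)

/-- The embedding of the circle into `ℂ` as the unit circle. -/
def toC (x : C1) : ℂ := (AddCircle.toCircle x : ℂ)

/-- Two unordered pairs `{a,b}`, `{c,d}` of points of the circle are linked if `c` and `d`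
lie in different connected components of the complement of `{a,b}`. -/
def Linked (a b c d : C1) : Prop :=
  c ∈ ({a,b}ᶜ : Set C1) ∧ d ∈ ({a,b}ᶜ : Set C1) ∧
    connectedComponentIn ({a,b}ᶜ : Set C1) c ≠ connectedComponentIn ({a,b}ᶜ : Set C1) d

/-- A lamination on the circle: a closed (in the open Möbius band, i.e. among pairs of
distinct points) symmetric set of pairwise unlinked pairs of distinct points. -/
structure IsLamination (Λ : Set (C1 × C1)) : Prop where
  ne : ∀ p ∈ Λ, p.1 ≠ p.2
  symm : ∀ p ∈ Λ, (p.2, p.1) ∈ Λ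
  isClosed : ∀ p ∈ closure Λ, p.1 ≠ p.2 → p ∈ Λ
  unlinked : ∀ p ∈ Λ, ∀ q ∈ Λ, ¬ Linked p.1 p.2 q.1 q.2

/-- The set of endpoints of leaves of a lamination. -/
def Ends (Λ : Set (C1 × C1)) : Set C1 := {x | ∃ y, (x, y) ∈ Λ}

/-- The union of the chords (in the unit disk of `ℂ`) realizing the leaves. -/
def chords (Λ : Set (C1 × C1)) : Set ℂ := ⋃ p ∈ Λ, segment ℝ (toC p.1) (toC p.2)

/-- A gap of a lamination: the closure of a connected component of the complement of the
union of the chords in the open unit disk. -/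
def IsGap (Λ : Set (C1 × C1)) (P : Set ℂ) : Prop :=
  ∃ x ∈ ball (0:ℂ) 1 \ chords Λ,
    P = closure (connectedComponentIn (ball (0:ℂ) 1 \ chords Λ) x)

/-- A lamination is very-full if every gap is a finite-sided ideal polygon, i.e. the convex
hull of at least three points of the circle. -/
def VeryFull (Λ : Set (C1 × C1)) : Prop :=
  IsLamination Λ ∧ ∀ P, IsGap Λ P →
    ∃ F : Finset C1, 3 ≤ F.card ∧ P = convexHull ℝ (toC '' (F : Set C1))

/-- An orientation-preserving circle homeomorphism: one admitting a monotone lift. -/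
def OrientationPreserving (f : C1 ≃ₜ C1) : Prop :=
  ∃ F : ℝ → ℝ, Monotone F ∧ ∀ x : ℝ, f (x : C1) = ((F x : ℝ) : C1)

/-- A subgroup of the homeomorphism group of the circle, as a set of homeomorphisms. -/
def IsHomeoGroup (G : Set (C1 ≃ₜ C1)) : Prop :=
  Homeomorph.refl C1 ∈ G ∧ (∀ g ∈ G, g.symm ∈ G) ∧ ∀ g ∈ G, ∀ h ∈ G, g.trans h ∈ G

/-- A lamination is invariant under a set of homeomorphisms. -/
def Invariant (G : Set (C1 ≃ₜ C1)) (Λ : Set (C1 × C1)) : Prop :=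
  ∀ g ∈ G, ∀ p ∈ Λ, (g p.1, g p.2) ∈ Λ

/-- Invariance under a single homeomorphism. -/
def InvariantUnder (g : C1 ≃ₜ C1) (Λ : Set (C1 × C1)) : Prop :=
  ∀ p ∈ Λ, (g p.1, g p.2) ∈ Λ

/-- A parabolic homeomorphism: exactly one fixed point. -/
def IsParabolic (g : C1 ≃ₜ C1) : Prop := ∃ x, fixedPoints ⇑g = {x}

/-- The cusp points of a group of circle homeomorphisms: fixed points of parabolics. -/
def CuspPoints (G : Set (C1 ≃ₜ C1)) : Set C1 :=
  {x | ∃ g ∈ G, fixedPoints ⇑g = {x}}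

/-- A rainbow at `p` for a lamination: a sequence of leaves each separating `p` from the
rest of the circle, with the arcs they cut off shrinking down to `p`. -/
def Rainbow (Λ : Set (C1 × C1)) (p : C1) : Prop :=
  ∃ l : ℕ → C1 × C1, (∀ i, l i ∈ Λ) ∧ (∀ i, (l i).1 ≠ p ∧ (l i).2 ≠ p) ∧
    Tendsto (fun i => (l i).1) atTop (nhds p) ∧
    Tendsto (fun i => (l i).2) atTop (nhds p) ∧
    ∀ U ∈ nhds p, ∀ᶠ i in atTop,
      connectedComponentIn ({(l i).1, (l i).2}ᶜ : Set C1) p ⊆ U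

/-- A pants-like collection of three very-full invariant laminations: pairwise transverse,
and endpoint sets pairwise meeting exactly in the cusp points of the group. -/
def PantsLike3 (G : Set (C1 ≃ₜ C1)) (Λ₁ Λ₂ Λ₃ : Set (C1 × C1)) : Prop :=
  VeryFull Λ₁ ∧ VeryFull Λ₂ ∧ VeryFull Λ₃ ∧
  Invariant G Λ₁ ∧ Invariant G Λ₂ ∧ Invariant G Λ₃ ∧
  Λ₁ ∩ Λ₂ = ∅ ∧ Λ₁ ∩ Λ₃ = ∅ ∧ Λ₂ ∩ Λ₃ = ∅ ∧
  Ends Λ₁ ∩ Ends Λ₂ = CuspPoints G ∧ Ends Λ₁ ∩ Ends Λ₃ = CuspPoints G ∧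
  Ends Λ₂ ∩ Ends Λ₃ = CuspPoints G

/-- A pants-like collection of two very-full invariant laminations. -/
def PantsLike2 (G : Set (C1 ≃ₜ C1)) (Λ₁ Λ₂ : Set (C1 × C1)) : Prop :=
  VeryFull Λ₁ ∧ VeryFull Λ₂ ∧ Invariant G Λ₁ ∧ Invariant G Λ₂ ∧
  Λ₁ ∩ Λ₂ = ∅ ∧ Ends Λ₁ ∩ Ends Λ₂ = CuspPoints G

/-- An attracting fixed point: some neighborhood is attracted to it under forward iteration. -/
def AttractingFixedPt (g : C1 ≃ₜ C1) (x : C1) : Prop :=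
  g x = x ∧ ∃ U ∈ nhds x, ∀ y ∈ U, Tendsto (fun n => (⇑g)^[n] y) atTop (nhds x)

/-- A repelling fixed point: attracting for the inverse. -/
def RepellingFixedPt (g : C1 ≃ₜ C1) (x : C1) : Prop :=
  g x = x ∧ ∃ U ∈ nhds x, ∀ y ∈ U, Tendsto (fun n => (⇑g.symm)^[n] y) atTop (nhds x)

namespace Aux19

lemma coe_sub (t u : ℝ) : ((t - u : ℝ) : C1) = (t:C1) - (u:C1) := rfl

lemma coe_eq_coe_iff {t u : ℝ} : (t : C1) = (u : C1) ↔ ∃ n : ℤ, (n : ℝ) = t - u := by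
  rw [← sub_eq_zero, ← coe_sub, AddCircle.coe_eq_zero_iff]
  constructor
  · rintro ⟨n, hn⟩; exact ⟨n, by simpa using hn⟩
  · rintro ⟨n, hn⟩; exact ⟨n, by simpa using hn⟩

lemma coe_inj {t u : ℝ} (ht : |t - u| < 1) (h : (t : C1) = (u : C1)) : t = u := by
  obtain ⟨n, hn⟩ := coe_eq_coe_iff.1 h
  have hn0 : n = 0 := by
    by_contra hn0
    have : (1:ℝ) ≤ |(n:ℝ)| := by exact_mod_cast Int.one_le_abs hn0
    rw [hn] at this; linarith
  rw [hn0] at hn; simp at hn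
  linarith [abs_nonneg (t-u), (abs_eq_zero (a := t - u)).symm, hn]

lemma isOpenMap_f (a : C1) : IsOpenMap (fun t : ℝ => a + (t : C1)) := by
  have : (fun t : ℝ => a + (t : C1)) =
      (Homeomorph.addLeft a) ∘ (QuotientAddGroup.mk : ℝ → C1) := rfl
  rw [this]
  exact (Homeomorph.addLeft a).isOpenMap.comp QuotientAddGroup.isOpenMap_coe

lemma cover (a : C1) {s : ℝ} (hs : s ∈ Ioo (0:ℝ) 1) (x : C1) :
    x = a ∨ x = a + (s:C1) ∨ (∃ t ∈ Ioo (0:ℝ) s, x = a + (t:C1)) ∨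
      (∃ u ∈ Ioo s (1:ℝ), x = a + (u:C1)) := by
  have : x - a ∈ (QuotientAddGroup.mk '' Ico (0:ℝ) (0 + 1) : Set C1) := by
    rw [AddCircle.coe_image_Ico_eq]; trivial
  obtain ⟨r, hr, hrx⟩ := this
  rw [zero_add] at hr
  have hx : x = a + (r : C1) := by rw [hrx]; abel
  rcases eq_or_lt_of_le hr.1 with h0 | h0
  · left; rw [hx, ← h0]; simp
  rcases lt_trichotomy r s with h1 | h1 | h1
  · right; right; left; exact ⟨r, ⟨h0, h1⟩, hx⟩
  · right; left; rw [hx, h1]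
  · right; right; right; exact ⟨r, ⟨h1, hr.2⟩, hx⟩

lemma not_mem_pair (a : C1) {s t : ℝ} (hs : s ∈ Ioo (0:ℝ) 1) (ht : t ∈ Ioo (0:ℝ) 1)
    (hts : t ≠ s) : a + (t:C1) ∈ ({a, a + (s:C1)}ᶜ : Set C1) := by
  simp only [mem_compl_iff, mem_insert_iff, mem_singleton_iff, not_or]
  constructor
  · intro h
    have h0 : (t:C1) = ((0:ℝ):C1) := by
      have := add_eq_left.mp h; simpa using this
    have := coe_inj (by rw [sub_zero, abs_of_pos ht.1]; exact ht.2) h0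
    linarith [ht.1]
  · intro h
    have h1 : (t:C1) = ((s:ℝ):C1) := add_left_cancel h
    have := coe_inj (by rw [abs_sub_lt_iff]; constructor <;> linarith [ht.1, ht.2, hs.1, hs.2]) h1
    exact hts this

lemma linked_arcs (a : C1) {s t u : ℝ} (hs : s ∈ Ioo (0:ℝ) 1) (ht : t ∈ Ioo 0 s)
    (hu : u ∈ Ioo s 1) :
    Linked a (a + (s:C1)) (a + (t:C1)) (a + (u:C1)) := by
  set b := a + (s:C1) with hb
  set I : Set C1 := (fun t : ℝ => a + (t : C1)) '' Ioo 0 s with hI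
  set J : Set C1 := (fun t : ℝ => a + (t : C1)) '' Ioo s 1 with hJ
  have hIopen : IsOpen I := isOpenMap_f a _ isOpen_Ioo
  have hJopen : IsOpen J := isOpenMap_f a _ isOpen_Ioo
  have hdisj : Disjoint I J := by
    rw [Set.disjoint_left]
    rintro x ⟨t', ht', rfl⟩ ⟨u', hu', hx⟩
    have h1 : (u' : C1) = (t' : C1) := add_left_cancel hx
    have heq := coe_inj (by
      rw [abs_of_pos (by linarith [hu'.1, ht'.2] : (0:ℝ) < u' - t')]
      linarith [hu'.2, ht'.1]) h1
    linarith [ht'.2, hu'.1]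
  have hsub : ({a, b}ᶜ : Set C1) ⊆ I ∪ J := by
    intro x hx
    simp only [mem_compl_iff, mem_insert_iff, mem_singleton_iff, not_or] at hx
    rcases cover a hs x with h | h | ⟨t', ht', rfl⟩ | ⟨u', hu', rfl⟩
    · exact absurd h hx.1
    · exact absurd h hx.2
    · exact Or.inl ⟨t', ht', rfl⟩
    · exact Or.inr ⟨u', hu', rfl⟩
  have hcmem : a + (t:C1) ∈ ({a, b}ᶜ : Set C1) :=
    not_mem_pair a hs ⟨ht.1, ht.2.trans hs.2⟩ (ne_of_lt ht.2)
  have hdmem : a + (u:C1) ∈ ({a, b}ᶜ : Set C1) :=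
    not_mem_pair a hs ⟨hs.1.trans hu.1, hu.2⟩ (ne_of_gt hu.1)
  refine ⟨hcmem, hdmem, ?_⟩
  intro hcomp
  have hcsub : connectedComponentIn ({a, b}ᶜ : Set C1) (a + (t:C1)) ⊆ I :=
    IsPreconnected.subset_left_of_subset_union hIopen hJopen hdisj
      ((connectedComponentIn_subset _ _).trans hsub)
      ⟨a + (t:C1), mem_connectedComponentIn hcmem, ⟨t, ht, rfl⟩⟩
      isPreconnected_connectedComponentIn
  have hmem : a + (u:C1) ∈ I := by
    rw [hcomp] at hcsub
    exact hcsub (mem_connectedComponentIn hdmem)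
  exact absurd hmem (Set.disjoint_right.1 hdisj ⟨u, hu, rfl⟩)

end Aux19
namespace Aux19

lemma dist_coe (a : C1) (t u : ℝ) :
    dist (a + (t:C1)) (a + (u:C1)) = ‖((u - t : ℝ) : C1)‖ := by
  rw [dist_eq_norm_sub']
  congr 1
  rw [coe_sub]; abel

lemma norm_coe_le (x : ℝ) : ‖((x:C1))‖ ≤ |x| := by
  simpa using QuotientAddGroup.norm_mk_le_norm (S := AddSubgroup.zmultiples (1:ℝ)) (m := x)

lemma norm_coe_eq (x : ℝ) (h : |x| ≤ 1/2) : ‖((x:C1))‖ = |x| := by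
  rw [AddCircle.norm_coe_eq_abs_iff (1:ℝ) one_ne_zero]; simpa using h

lemma exists_shorter (G : Set (C1 ≃ₜ C1))
    (hmin : ∀ x : C1, Dense {y : C1 | ∃ g ∈ G, y = g x})
    (Λ : Set (C1 × C1)) (hΛ : IsLamination Λ) (hinv : Invariant G Λ)
    {a b : C1} {s : ℝ} (hab : (a, b) ∈ Λ) (hs : s ∈ Ioo (0:ℝ) 1)
    (hb : b = a + (s:C1)) : ∃ p ∈ Λ, dist p.1 p.2 < s := by
  have hIopen : IsOpen ((fun t : ℝ => a + (t : C1)) '' Ioo 0 s) :=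
    isOpenMap_f a _ isOpen_Ioo
  obtain ⟨y, hy, hyI⟩ := (hmin a).exists_mem_open hIopen
    ⟨_, ⟨s/2, ⟨half_pos hs.1, half_lt_self hs.1⟩, rfl⟩⟩
  obtain ⟨g, hg, rfl⟩ := hy
  obtain ⟨t, ht, hgat'⟩ := hyI
  have hgat : a + (t:C1) = g a := hgat'
  have hleaf : (g a, g b) ∈ Λ := hinv g hg (a, b) hab
  -- common computation
  have key : ∀ u : ℝ, u ∈ Icc 0 s → g b = a + (u:C1) → ∃ p ∈ Λ, dist p.1 p.2 < s := by
    intro u hu hgb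
    refine ⟨(g a, g b), hleaf, ?_⟩
    have : dist (g a) (g b) = ‖((u - t : ℝ) : C1)‖ := by
      rw [← hgat, hgb]; exact dist_coe a t u
    rw [this]
    calc ‖((u - t : ℝ) : C1)‖ ≤ |u - t| := norm_coe_le _
      _ < s := by
          rw [abs_sub_lt_iff]
          constructor <;> [linarith [hu.2, ht.1]; linarith [hu.1, ht.2]]
  rcases cover a hs (g b) with h | h | ⟨t', ht', h⟩ | ⟨u, hu, h⟩
  · exact key 0 ⟨le_refl 0, hs.1.le⟩ (by rw [h]; simp)
  · exact key s ⟨hs.1.le, le_refl s⟩ h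
  · exact key t' ⟨ht'.1.le, ht'.2.le⟩ h
  · exfalso
    have hlink : Linked a b (g a) (g b) := by
      rw [h, ← hgat, hb]
      exact linked_arcs a hs ht hu
    exact hΛ.unlinked (a, b) hab (g a, g b) hleaf hlink

end Aux19
namespace Aux19
lemma coe_add (t u : ℝ) : ((t + u : ℝ) : C1) = (t:C1) + (u:C1) := rfl

lemma dist_add_coe (a : C1) (s : ℝ) : dist a (a + (s:C1)) = ‖((s:ℝ):C1)‖ := by
  rw [dist_eq_norm_sub']; congr 1; abel

lemma coe_one : ((1:ℝ) : C1) = 0 := AddCircle.coe_period 1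
end Aux19
theorem stmt_19 (G : Set (C1 ≃ₜ C1)) (hG : IsHomeoGroup G)
    (hGo : ∀ g ∈ G, OrientationPreserving g)
    (hmin : ∀ x : C1, Dense {y : C1 | ∃ g ∈ G, y = g x})
    (Λ : Set (C1 × C1)) (hΛ : IsLamination Λ) (hinv : Invariant G Λ)
    (hne : Λ.Nonempty) :
    (∀ ε : ℝ, 0 < ε → ∃ p ∈ Λ, dist p.1 p.2 < ε) ∧
    {p : C1 × C1 | p.1 = p.2} ⊆ closure Λ := by
  have hdistc : Continuous (fun p : C1 × C1 => dist p.1 p.2) :=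
    Continuous.dist continuous_fst continuous_snd
  have part1 : ∀ ε : ℝ, 0 < ε → ∃ p ∈ Λ, dist p.1 p.2 < ε := by
    by_contra hc
    push_neg at hc
    obtain ⟨ε, hε, hfor⟩ := hc
    have hsubS : Λ ⊆ {p : C1 × C1 | ε ≤ dist p.1 p.2} := fun p hp => hfor p hp
    have hSclosed : IsClosed {p : C1 × C1 | ε ≤ dist p.1 p.2} :=
      isClosed_le continuous_const hdistc
    have hclosed : IsClosed Λ := by
      rw [← closure_subset_iff_isClosed]
      intro p hp
      have hεp : ε ≤ dist p.1 p.2 := hSclosed.closure_subset_iff.2 hsubS hp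
      exact hΛ.isClosed p hp (dist_pos.mp (lt_of_lt_of_le hε hεp))
    obtain ⟨q, hq, hqm⟩ := hclosed.isCompact.exists_isMinOn hne hdistc.continuousOn
    -- lift q.2 - q.1
    have : q.2 - q.1 ∈ (QuotientAddGroup.mk '' Ico (0:ℝ) (0 + 1) : Set C1) := by
      rw [AddCircle.coe_image_Ico_eq]; trivial
    obtain ⟨s, hsIco, hs⟩ := this
    rw [zero_add] at hsIco
    have hbq : q.2 = q.1 + (s : C1) := by rw [hs]; abel
    have hs0 : s ≠ 0 := by
      rintro rfl
      exact hΛ.ne q hq (by simpa using hbq.symm)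
    have hsIoo : s ∈ Ioo (0:ℝ) 1 := ⟨lt_of_le_of_ne hsIco.1 (Ne.symm hs0), hsIco.2⟩
    have habΛ : (q.1, q.2) ∈ Λ := by simpa using hq
    rcases le_or_gt s (1/2) with hs2 | hs2
    · have hδ : dist q.1 q.2 = s := by
        rw [hbq, Aux19.dist_add_coe,
          Aux19.norm_coe_eq s (by rw [abs_of_pos hsIoo.1]; exact hs2), abs_of_pos hsIoo.1]
      obtain ⟨p, hp, hlt⟩ := Aux19.exists_shorter G hmin Λ hΛ hinv habΛ hsIoo hbq
      have h2 : dist q.1 q.2 ≤ dist p.1 p.2 := hqm hp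
      rw [hδ] at h2
      linarith
    · have hbaΛ : (q.2, q.1) ∈ Λ := hΛ.symm q hq
      have hs'Ioo : (1 - s) ∈ Ioo (0:ℝ) 1 := ⟨by linarith [hsIoo.2], by linarith [hsIoo.1]⟩
      have haq : q.1 = q.2 + ((1 - s : ℝ) : C1) := by
        rw [hbq, add_assoc, ← Aux19.coe_add, show s + (1 - s) = (1:ℝ) by ring,
          Aux19.coe_one, add_zero]
      obtain ⟨p, hp, hlt⟩ := Aux19.exists_shorter G hmin Λ hΛ hinv hbaΛ hs'Ioo haq
      have hδ : dist q.1 q.2 = 1 - s := by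
        rw [dist_comm, haq, Aux19.dist_add_coe,
          Aux19.norm_coe_eq (1-s) (by rw [abs_of_pos hs'Ioo.1]; linarith), abs_of_pos hs'Ioo.1]
      have h2 : dist q.1 q.2 ≤ dist p.1 p.2 := hqm hp
      rw [hδ] at h2
      linarith
  refine ⟨part1, ?_⟩
  -- find a diagonal point in the closure
  have hclne : (closure Λ).Nonempty := hne.closure
  obtain ⟨q, hq, hqm⟩ := (isClosed_closure (s := Λ)).isCompact.exists_isMinOn hclne
    hdistc.continuousOn
  have hq0 : q.1 = q.2 := by
    by_contra hne'
    have hpos : 0 < dist q.1 q.2 := dist_pos.mpr hne'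
    obtain ⟨p, hp, hlt⟩ := part1 _ hpos
    have h2 : dist q.1 q.2 ≤ dist p.1 p.2 := hqm (subset_closure hp)
    linarith
  -- the set of diagonal closure points is closed and invariant
  set A : Set C1 := {x : C1 | ((x, x) : C1 × C1) ∈ closure Λ} with hA
  have hAclosed : IsClosed A :=
    IsClosed.preimage (continuous_id.prodMk continuous_id) isClosed_closure
  have hAinv : ∀ g ∈ G, ∀ x ∈ A, g x ∈ A := by
    intro g hg x hx
    have hF : Continuous (fun p : C1 × C1 => ((g p.1 : C1), (g p.2 : C1))) :=
      (g.continuous.comp continuous_fst).prodMk (g.continuous.comp continuous_snd)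
    have himg : (fun p : C1 × C1 => ((g p.1 : C1), (g p.2 : C1))) '' Λ ⊆ Λ := by
      rintro y ⟨p, hp, rfl⟩
      exact hinv g hg p hp
    have : ((g x, g x) : C1 × C1) ∈ closure Λ := by
      have h1 : ((g x, g x) : C1 × C1) ∈
          (fun p : C1 × C1 => ((g p.1 : C1), (g p.2 : C1))) '' closure Λ := ⟨(x, x), hx, rfl⟩
      exact (closure_mono himg) ((image_closure_subset_closure_image hF) h1)
    exact this
  have hx0 : q.1 ∈ A := by
    show ((q.1, q.1) : C1 × C1) ∈ closure Λ
    rw [show ((q.1, q.1) : C1 × C1) = q by ext <;> simp [hq0]]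
    exact hq
  have hAuniv : A = univ := by
    have horb : {y : C1 | ∃ g ∈ G, y = g q.1} ⊆ A := by
      rintro y ⟨g, hg, rfl⟩
      exact hAinv g hg q.1 hx0
    have := closure_mono horb
    rw [(hmin q.1).closure_eq, hAclosed.closure_eq] at this
    exact le_antisymm (subset_univ A) this
  intro p hp
  have hp' : p.1 = p.2 := hp
  have hmem1 : p.1 ∈ A := by rw [hAuniv]; trivial
  have hmem : ((p.1, p.1) : C1 × C1) ∈ closure Λ := hmem1
  have hpe : p = ((p.1, p.1) : C1 × C1) := Prod.ext rfl hp'.symm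
  rw [hpe]
  exact hmem
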